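/- Let τ₁(x,y) = x + iy + √3 and τ₂(x,y) = x² + y² + 3 as functions ℝ² → ℂ. Then the Bäcklund transformation relations between τ₁ and τ₂ hold on ℝ²: (Dₓ² − (1/√3)Dₓ + (i/√3)Dᵧ) τ₁·τ₂ = 0 and (−Dₓ + iDᵧ + Dₓ³ − √3 i DₓDᵧ) τ₁·τ₂ = 0. -/

import Mathlib

open Complex

/-- Cubic polynomial with complex coefficients, as a function of a real variable. -/
noncomputable def cub (c0 c1 c2 c3 : ℂ) (t : ℝ) : ℂ :=
  c0 + c1 * t + c2 * t ^ 2 + c3 * t ^ 3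

lemma cub_hasDerivAt (c0 c1 c2 c3 : ℂ) (t : ℝ) :
    HasDerivAt (cub c0 c1 c2 c3) (cub c1 (2 * c2) (3 * c3) 0 t) t := by
  have h : HasDerivAt (fun s : ℝ => (s : ℂ)) 1 t := by
    exact (hasDerivAt_id t).ofReal_comp
  have h2 := (h.mul h).const_mul c2
  have h3 := ((h.mul h).mul h).const_mul c3
  have H := (((hasDerivAt_const t c0).add (h.const_mul c1)).add h2).add h3
  convert H using 1
  · rfl
  · funext s; simp only [cub, Pi.add_apply, Pi.mul_apply]; ring
  · simp only [cub, Pi.mul_apply]; push_cast; ring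

lemma deriv_cub (c0 c1 c2 c3 : ℂ) :
    deriv (cub c0 c1 c2 c3) = cub c1 (2 * c2) (3 * c3) 0 :=
  funext fun t => (cub_hasDerivAt c0 c1 c2 c3 t).deriv

lemma cub_id0 (c0 c1 c2 c3 : ℂ) : iteratedDeriv 0 (cub c0 c1 c2 c3) 0 = c0 := by
  simp [cub]

lemma cub_id1 (c0 c1 c2 c3 : ℂ) : iteratedDeriv 1 (cub c0 c1 c2 c3) 0 = c1 := by
  rw [iteratedDeriv_one, deriv_cub]; simp [cub]

lemma cub_id2 (c0 c1 c2 c3 : ℂ) : iteratedDeriv 2 (cub c0 c1 c2 c3) 0 = 2 * c2 := by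
  rw [iteratedDeriv_succ', deriv_cub, cub_id1]

lemma cub_id3 (c0 c1 c2 c3 : ℂ) : iteratedDeriv 3 (cub c0 c1 c2 c3) 0 = 6 * c3 := by
  rw [iteratedDeriv_succ', deriv_cub, cub_id2]; ring

/-- Hirota bilinear derivative `Dₓ^m Dᵧ^n f·g` for functions of `(x,y) ∈ ℝ²`. -/
noncomputable def hirota (m n : ℕ) (f g : ℝ × ℝ → ℂ) (p : ℝ × ℝ) : ℂ :=
  iteratedDeriv m (fun a =>
    iteratedDeriv n (fun b =>
      f (p.1 + a, p.2 + b) * g (p.1 - a, p.2 - b)) 0) 0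

/-- `τ₁(x,y) = x + iy + √3`. -/
noncomputable def tau1 (p : ℝ × ℝ) : ℂ :=
  (p.1 : ℂ) + (p.2 : ℂ) * I + (Real.sqrt 3 : ℂ)

/-- `τ₂(x,y) = x² + y² + 3`. -/
noncomputable def tau2 (p : ℝ × ℝ) : ℂ :=
  ((p.1 ^ 2 + p.2 ^ 2 + 3 : ℝ) : ℂ)

lemma outer_n0 (p : ℝ × ℝ) :
    (fun a : ℝ => iteratedDeriv 0
        (fun b : ℝ => tau1 (p.1 + a, p.2 + b) * tau2 (p.1 - a, p.2 - b)) 0)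
      = cub ((↑p.1 + Real.sqrt 3 + I * ↑p.2) * (↑p.1 ^ 2 + ↑p.2 ^ 2 + 3))
          ((↑p.1 ^ 2 + ↑p.2 ^ 2 + 3) - 2 * ↑p.1 * (↑p.1 + Real.sqrt 3 + I * ↑p.2))
          ((↑p.1 + Real.sqrt 3 + I * ↑p.2) - 2 * ↑p.1) 1 := by
  funext a
  simp only [iteratedDeriv_zero, cub, tau1, tau2]
  push_cast
  ring

lemma outer_n1 (p : ℝ × ℝ) :
    (fun a : ℝ => iteratedDeriv 1
        (fun b : ℝ => tau1 (p.1 + a, p.2 + b) * tau2 (p.1 - a, p.2 - b)) 0)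
      = cub (I * (↑p.1 ^ 2 + ↑p.2 ^ 2 + 3) - 2 * ↑p.2 * (↑p.1 + Real.sqrt 3 + I * ↑p.2))
          (-2 * I * ↑p.1 - 2 * ↑p.2) I 0 := by
  funext a
  have h : (fun b : ℝ => tau1 (p.1 + a, p.2 + b) * tau2 (p.1 - a, p.2 - b))
      = cub ((↑p.1 + ↑a + Real.sqrt 3 + I * ↑p.2) * ((↑p.1 - ↑a) ^ 2 + ↑p.2 ^ 2 + 3))
          (I * ((↑p.1 - ↑a) ^ 2 + ↑p.2 ^ 2 + 3)
            - 2 * ↑p.2 * (↑p.1 + ↑a + Real.sqrt 3 + I * ↑p.2))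
          ((↑p.1 + ↑a + Real.sqrt 3 + I * ↑p.2) - 2 * I * ↑p.2) I := by
    funext b
    simp only [cub, tau1, tau2]
    push_cast
    ring
  rw [h, cub_id1]
  simp only [cub]
  push_cast
  ring

/-- The Bäcklund transformation relations between `τ₁` and `τ₂`. -/
theorem backlund_tau1_tau2 :
    (∀ p : ℝ × ℝ,
      hirota 2 0 tau1 tau2 p - (1 / (Real.sqrt 3 : ℂ)) * hirota 1 0 tau1 tau2 p
        + (I / (Real.sqrt 3 : ℂ)) * hirota 0 1 tau1 tau2 p = 0) ∧
    (∀ p : ℝ × ℝ,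
      -hirota 1 0 tau1 tau2 p + I * hirota 0 1 tau1 tau2 p
        + hirota 3 0 tau1 tau2 p
        - (Real.sqrt 3 : ℂ) * I * hirota 1 1 tau1 tau2 p = 0) := by
  have hs0 : (Real.sqrt 3 : ℂ) ≠ 0 := by
    simpa using Real.sqrt_ne_zero'.2 (by norm_num : (0:ℝ) < 3)
  have hs2 : (Real.sqrt 3 : ℂ) ^ 2 = 3 := by
    rw [← Complex.ofReal_pow, Real.sq_sqrt (by norm_num : (3:ℝ) ≥ 0)]; norm_num
  have h10 : ∀ p : ℝ × ℝ, hirota 1 0 tau1 tau2 p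
      = (↑p.1 ^ 2 + ↑p.2 ^ 2 + 3) - 2 * ↑p.1 * (↑p.1 + Real.sqrt 3 + I * ↑p.2) := by
    intro p; rw [hirota, outer_n0, cub_id1]
  have h20 : ∀ p : ℝ × ℝ, hirota 2 0 tau1 tau2 p
      = 2 * ((↑p.1 + Real.sqrt 3 + I * ↑p.2) - 2 * ↑p.1) := by
    intro p; rw [hirota, outer_n0, cub_id2]
  have h30 : ∀ p : ℝ × ℝ, hirota 3 0 tau1 tau2 p = 6 := by
    intro p; rw [hirota, outer_n0, cub_id3]; ring
  have h01 : ∀ p : ℝ × ℝ, hirota 0 1 tau1 tau2 p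
      = I * (↑p.1 ^ 2 + ↑p.2 ^ 2 + 3) - 2 * ↑p.2 * (↑p.1 + Real.sqrt 3 + I * ↑p.2) := by
    intro p; rw [hirota, outer_n1, cub_id0]
  have h11 : ∀ p : ℝ × ℝ, hirota 1 1 tau1 tau2 p = -2 * I * ↑p.1 - 2 * ↑p.2 := by
    intro p; rw [hirota, outer_n1, cub_id1]
  constructor
  · intro p
    rw [h20, h10, h01]
    field_simp
    linear_combination (2 : ℂ) * hs2 + (↑p.1 ^ 2 - ↑p.2 ^ 2 + 3) * Complex.I_sq
  · intro p
    rw [h10, h01, h30, h11]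
    linear_combination (↑p.1 ^ 2 - ↑p.2 ^ 2 + 3 + 2 * (Real.sqrt 3 : ℂ) * ↑p.1) * Complex.I_sq
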